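/- Let n ≥ 1 and let t_1, …, t_{n+1} be pairwise distinct real numbers. Let L be the collocation matrix of the Newton basis at these nodes. Then L = F_n · F_{n−1} · ⋯ · F_1 · D, where for i = 1, …, n, F_i is the (n+1)×(n+1) lower bidiagonal matrix with unit diagonal whose only possibly nonzero off-diagonal entries are (F_i)_{p,p−1} = m_{p,p−i} for p = i+1, …, n+1, with m_{p,q} := ∏_{k=1}^{q−1} (t_p − t_{p−k})/(t_{p−1} − t_{p−k−1}) (so m_{p,1} = 1), and D is the diagonal matrix with diagonal entries p_i := ∏_{k=1}^{i−1}(t_i − t_k) for i = 1, …, n+1 (empty products equal 1). -/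

import Mathlib

open Finset

/-- Off-diagonal entries of the bidiagonal factorization (1-based indices):
`m_{p,q} = ∏_{k=1}^{q−1} (t_p − t_{p−k})/(t_{p−1} − t_{p−k−1})`. -/
noncomputable def mEntry (t : ℕ → ℝ) (p q : ℕ) : ℝ :=
  ∏ k ∈ Finset.Icc 1 (q - 1), (t p - t (p - k)) / (t (p - 1) - t (p - k - 1))

/-- Diagonal entries `p_i = ∏_{k=1}^{i−1} (t_i − t_k)` (1-based index `i`). -/
noncomputable def pEntry (t : ℕ → ℝ) (i : ℕ) : ℝ :=
  ∏ k ∈ Finset.Icc 1 (i - 1), (t i - t k)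

/-- `F_i`: lower bidiagonal matrix with unit diagonal whose only possibly nonzero
off-diagonal entries are `(F_i)_{p,p−1} = m_{p,p−i}` for `p = i+1, …, n+1`
(1-based `p`; rows/columns indexed by `Fin (n+1)`, entry `(p,q)` has 1-based
indices `p.val+1`, `q.val+1`). -/
noncomputable def Fmat (n : ℕ) (t : ℕ → ℝ) (i : ℕ) :
    Matrix (Fin (n + 1)) (Fin (n + 1)) ℝ :=
  Matrix.of fun p q =>
    if p.val = q.val then 1
    else if p.val = q.val + 1 ∧ i ≤ p.val then mEntry t (p.val + 1) (p.val + 1 - i)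
    else 0

/-- The diagonal matrix `D` with entries `p_1, …, p_{n+1}`. -/
noncomputable def Dmat (n : ℕ) (t : ℕ → ℝ) :
    Matrix (Fin (n + 1)) (Fin (n + 1)) ℝ :=
  Matrix.diagonal fun i => pEntry t (i.val + 1)

lemma prod_reflect (f : ℕ → ℝ) (a b c : ℕ) (ha : a ≤ c) (hb : b ≤ c) :
    ∏ k ∈ Finset.Icc a b, f (c - k) = ∏ j ∈ Finset.Icc (c - b) (c - a), f j := by
  refine Finset.prod_nbij' (fun k => c - k) (fun j => c - j) ?_ ?_ ?_ ?_ ?_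
  · intro k hk; simp only [mem_Icc] at *; omega
  · intro j hj; simp only [mem_Icc] at *; omega
  · intro k hk; simp only [mem_Icc] at *; omega
  · intro j hj; simp only [mem_Icc] at *; omega
  · intro k hk; rfl

lemma prod_Icc_bot (f : ℕ → ℝ) (a b : ℕ) (h : a ≤ b) :
    ∏ k ∈ Finset.Icc a b, f k = f a * ∏ k ∈ Finset.Icc (a+1) b, f k := by
  rw [← Finset.Ico_add_one_right_eq_Icc, ← Finset.Ico_add_one_right_eq_Icc,
    Finset.prod_eq_prod_Ico_succ_bot (by omega) f]

lemma mEntry_eq (t : ℕ → ℝ) (Q i : ℕ) (h1 : 1 ≤ i) (h2 : i ≤ Q + 1) :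
    mEntry t (Q + 2) (Q + 2 - i)
      = (∏ j ∈ Finset.Icc (i+1) (Q+1), (t (Q+2) - t j))
        / (∏ k ∈ Finset.Icc i Q, (t (Q+1) - t k)) := by
  unfold mEntry
  have he : Q + 2 - i - 1 = Q + 1 - i := by omega
  rw [he]
  have hbody : ∏ k ∈ Finset.Icc 1 (Q+1-i),
      (t (Q+2) - t (Q+2-k)) / (t (Q+2-1) - t (Q+2-k-1))
      = ∏ k ∈ Finset.Icc 1 (Q+1-i),
      (t (Q+2) - t (Q+2-k)) / (t (Q+1) - t (Q+1-k)) := by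
    refine Finset.prod_congr rfl fun k hk => ?_
    simp only [mem_Icc] at hk
    have : Q + 2 - k - 1 = Q + 1 - k := by omega
    rw [this, show Q + 2 - 1 = Q + 1 from rfl]
  rw [hbody, Finset.prod_div_distrib]
  have hnum := prod_reflect (fun j => t (Q+2) - t j) 1 (Q+1-i) (Q+2) (by omega) (by omega)
  have hden := prod_reflect (fun j => t (Q+1) - t j) 1 (Q+1-i) (Q+1) (by omega) (by omega)
  rw [hnum, hden]
  have e1 : Q + 2 - (Q + 1 - i) = i + 1 := by omega
  have e2 : Q + 2 - 1 = Q + 1 := by omega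
  have e3 : Q + 1 - (Q + 1 - i) = i := by omega
  have e4 : Q + 1 - 1 = Q := by omega
  rw [e1, e2, e3, e4]

noncomputable def Hdef (t : ℕ → ℝ) (i P Q : ℕ) : ℝ :=
  if Q < P ∧ i - 1 ≤ Q then ∏ k ∈ Finset.Icc i Q, (t (P+1) - t k) / (t (Q+1) - t k)
  else if P = Q then 1 else 0

lemma step_scalar (n : ℕ) (t : ℕ → ℝ)
    (ht : ∀ i j, 1 ≤ i → i ≤ n + 1 → 1 ≤ j → j ≤ n + 1 → i ≠ j → t i ≠ t j)
    (i P Q : ℕ) (h1 : 1 ≤ i) (hP : P ≤ n) (hQ : Q + 1 ≤ n) :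
    Hdef t i P Q = Hdef t (i+1) P Q
      + Hdef t (i+1) P (Q+1) * (if i ≤ Q + 1 then mEntry t (Q+2) (Q+2-i) else 0) := by
  have hsub : ∀ a b : ℕ, 1 ≤ a → a ≤ n+1 → 1 ≤ b → b ≤ n+1 → a ≠ b → t a - t b ≠ 0 :=
    fun a b ha1 ha2 hb1 hb2 hab => sub_ne_zero.mpr (ht a b ha1 ha2 hb1 hb2 hab)
  by_cases hA : Q < P ∧ i - 1 ≤ Q
  · obtain ⟨hQP, hiQ⟩ := hA
    by_cases hAi : i ≤ Q
    · -- main case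
      have hcond : i ≤ Q + 1 := by omega
      rw [if_pos hcond]
      rw [Hdef, if_pos ⟨hQP, hiQ⟩, Hdef, if_pos ⟨hQP, by omega⟩]
      rw [mEntry_eq t Q i h1 hcond]
      have hDne : ∀ k ∈ Finset.Icc i Q, t (Q+1) - t k ≠ 0 := by
        intro k hk; simp only [mem_Icc] at hk
        exact hsub (Q+1) k (by omega) (by omega) (by omega) (by omega) (by omega)
      have hB : (∏ k ∈ Finset.Icc (i+1) Q, (t (Q+1) - t k)) ≠ 0 :=
        Finset.prod_ne_zero_iff.mpr (fun k hk => hDne k (by simp only [mem_Icc] at *; omega))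
      have hDi : t (Q+1) - t i ≠ 0 :=
        hsub (Q+1) i (by omega) (by omega) (by omega) (by omega) (by omega)
      rw [prod_Icc_bot (fun k => (t (P+1) - t k) / (t (Q+1) - t k)) i Q hAi,
        prod_Icc_bot (fun k => t (Q+1) - t k) i Q hAi]
      simp only [Finset.prod_div_distrib]
      by_cases hP2 : Q + 1 < P
      · rw [Hdef, if_pos ⟨hP2, by omega⟩, Finset.prod_div_distrib,
          Finset.prod_Icc_succ_top (by omega : i+1 ≤ Q+1),
          Finset.prod_Icc_succ_top (by omega : i+1 ≤ Q+1)]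
        have hC : (∏ k ∈ Finset.Icc (i+1) Q, (t (Q+1+1) - t k)) * (t (Q+1+1) - t (Q+1)) ≠ 0 := by
          refine mul_ne_zero (Finset.prod_ne_zero_iff.mpr fun k hk => ?_) ?_
          · simp only [mem_Icc] at hk
            exact hsub (Q+2) k (by omega) (by omega) (by omega) (by omega) (by omega)
          · exact hsub (Q+2) (Q+1) (by omega) (by omega) (by omega) (by omega) (by omega)
        obtain ⟨hC1, hC2⟩ := mul_ne_zero_iff.mp hC
        field_simp
        ring
      · have hPQ1 : P = Q + 1 := by omega
        rw [Hdef, if_neg (by omega), if_pos hPQ1,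
          Finset.prod_Icc_succ_top (by omega : i+1 ≤ Q+1)]
        rw [hPQ1]
        field_simp
        ring
    · -- Q = i - 1
      have hiQ1 : i = Q + 1 := by omega
      rw [if_pos (by omega)]
      rw [Hdef, if_pos ⟨hQP, hiQ⟩, hiQ1]
      rw [show Finset.Icc (Q+1) Q = ∅ from Finset.Icc_eq_empty (by omega), Finset.prod_empty]
      rw [Hdef, if_neg (by omega), if_neg (by omega)]
      have hm : mEntry t (Q+2) (Q+2-(Q+1)) = 1 := by
        unfold mEntry
        rw [show Q+2-(Q+1) = 1 from by omega]
        simp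
      rw [hm]
      by_cases hP2 : Q + 1 < P
      · rw [Hdef, if_pos ⟨hP2, by omega⟩,
          show Finset.Icc (Q+1+1) (Q+1) = ∅ from Finset.Icc_eq_empty (by omega),
          Finset.prod_empty]
        ring
      · rw [Hdef, if_neg (by omega), if_pos (by omega)]
        ring
  · -- not first branch
    rw [Hdef, if_neg hA]
    by_cases hPQ : P = Q
    · rw [if_pos hPQ, Hdef, if_neg (by omega), if_pos hPQ,
        Hdef, if_neg (by omega), if_neg (by omega)]
      ring
    · rw [if_neg hPQ]
      by_cases hPltQ : P < Q
      · rw [Hdef, if_neg (by omega), if_neg hPQ,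
          Hdef, if_neg (by omega), if_neg (by omega)]
        ring
      · have h3 : Q < P ∧ Q + 1 < i := by omega
        rw [Hdef, if_neg (by omega), if_neg hPQ, if_neg (by omega)]
        ring

noncomputable def Hmat (n : ℕ) (t : ℕ → ℝ) (i : ℕ) :
    Matrix (Fin (n + 1)) (Fin (n + 1)) ℝ :=
  Matrix.of fun p q => Hdef t i p.val q.val

lemma Hmat_top (n : ℕ) (t : ℕ → ℝ) : Hmat n t (n+1) = 1 := by
  ext p q
  have hq : q.val ≤ n := by omega
  have hp : p.val ≤ n := by omega
  simp only [Hmat, Matrix.of_apply, Hdef, Matrix.one_apply]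
  by_cases h : p = q
  · subst h; rw [if_neg (by omega), if_pos rfl, if_pos rfl]
  · have hv : p.val ≠ q.val := fun hh => h (Fin.ext hh)
    rw [if_neg (by omega), if_neg hv, if_neg h]

lemma step_mat (n : ℕ) (t : ℕ → ℝ)
    (ht : ∀ i j, 1 ≤ i → i ≤ n + 1 → 1 ≤ j → j ≤ n + 1 → i ≠ j → t i ≠ t j)
    (i : ℕ) (h1 : 1 ≤ i) (h2 : i ≤ n) :
    Hmat n t i = Hmat n t (i+1) * Fmat n t i := by
  ext p q
  rw [Matrix.mul_apply]
  have hF : ∀ r : Fin (n+1), Fmat n t i r q =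
      (if r = q then 1 else 0)
      + (if r.val = q.val + 1 ∧ i ≤ q.val + 1 then mEntry t (q.val+2) (q.val+2-i) else 0) := by
    intro r
    simp only [Fmat, Matrix.of_apply]
    by_cases hrq : r.val = q.val
    · rw [if_pos hrq, if_pos (Fin.ext hrq), if_neg (by omega)]; ring
    · have hrq' : r ≠ q := fun hh => hrq (congrArg Fin.val hh)
      rw [if_neg hrq]
      by_cases hr1 : r.val = q.val + 1
      · by_cases hi : i ≤ q.val + 1
        · rw [if_pos (⟨hr1, by omega⟩ : r.val = q.val + 1 ∧ i ≤ r.val), if_neg hrq',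
            if_pos (⟨hr1, hi⟩ : r.val = q.val + 1 ∧ i ≤ q.val + 1), hr1]
          ring
        · rw [if_neg (by omega : ¬(r.val = q.val + 1 ∧ i ≤ r.val)), if_neg hrq',
            if_neg (by omega : ¬(r.val = q.val + 1 ∧ i ≤ q.val + 1))]
          ring
      · rw [if_neg (by omega : ¬(r.val = q.val + 1 ∧ i ≤ r.val)), if_neg hrq',
          if_neg (by omega : ¬(r.val = q.val + 1 ∧ i ≤ q.val + 1))]
        ring
  simp only [hF, mul_add]
  rw [Finset.sum_add_distrib]
  have hsum1 : ∑ r : Fin (n+1), Hmat n t (i+1) p r * (if r = q then 1 else 0)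
      = Hmat n t (i+1) p q := by
    simp only [mul_ite, mul_one, mul_zero]
    rw [Finset.sum_ite_eq' Finset.univ q (fun r => Hmat n t (i+1) p r)]
    simp
  rw [hsum1]
  have hp2 : p.val < n + 1 := p.isLt
  by_cases hq : q.val = n
  · have hsum2 : ∑ r : Fin (n+1), Hmat n t (i+1) p r *
        (if r.val = q.val + 1 ∧ i ≤ q.val + 1 then mEntry t (q.val+2) (q.val+2-i) else 0)
        = 0 := by
      refine Finset.sum_eq_zero fun r _ => ?_
      have := r.isLt
      rw [if_neg (by omega)]; ring
    rw [hsum2, add_zero]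
    show Hdef t i p.val q.val = Hdef t (i+1) p.val q.val
    unfold Hdef
    have c1 : ¬(q.val < p.val ∧ i - 1 ≤ q.val) := by omega
    have c2 : ¬(q.val < p.val ∧ i + 1 - 1 ≤ q.val) := by omega
    rw [if_neg c1, if_neg c2]
  · have hq2 : q.val + 1 ≤ n := by have := q.isLt; omega
    set r₀ : Fin (n+1) := ⟨q.val + 1, by omega⟩ with hr₀
    have hsum2 : ∑ r : Fin (n+1), Hmat n t (i+1) p r *
        (if r.val = q.val + 1 ∧ i ≤ q.val + 1 then mEntry t (q.val+2) (q.val+2-i) else 0)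
        = Hmat n t (i+1) p r₀ * (if i ≤ q.val + 1 then mEntry t (q.val+2) (q.val+2-i) else 0) := by
      rw [Finset.sum_eq_single_of_mem r₀ (Finset.mem_univ _)]
      · congr 1
        have hcond : (r₀.val = q.val + 1 ∧ i ≤ q.val + 1) ↔ (i ≤ q.val + 1) := by
          simp [hr₀]
        by_cases hi : i ≤ q.val + 1
        · rw [if_pos (hcond.mpr hi), if_pos hi]
        · rw [if_neg (fun hc => hi (hcond.mp hc)), if_neg hi]
      · intro r _ hne
        have hv : r.val ≠ q.val + 1 := fun hh => hne (Fin.ext hh)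
        rw [if_neg (by omega)]; ring
    rw [hsum2]
    exact step_scalar n t ht i p.val q.val h1 (by omega) hq2

lemma list_prod_eq (n : ℕ) (t : ℕ → ℝ)
    (ht : ∀ i j, 1 ≤ i → i ≤ n + 1 → 1 ≤ j → j ≤ n + 1 → i ≠ j → t i ≠ t j)
    (hn : 1 ≤ n) :
    ((List.range n).map (fun k => Fmat n t (n - k))).prod = Hmat n t 1 := by
  have key : ∀ j, j ≤ n →
      ((List.range j).map (fun k => Fmat n t (n - k))).prod = Hmat n t (n + 1 - j) := by
    intro j
    induction j with
    | zero => intro _; simp [Hmat_top]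
    | succ j ih =>
      intro hj
      rw [List.range_succ, List.map_append, List.prod_append, ih (by omega)]
      simp only [List.map_cons, List.map_nil, List.prod_cons, List.prod_nil, mul_one]
      have hstep := step_mat n t ht (n - j) (by omega) (by omega)
      rw [show n + 1 - j = (n - j) + 1 from by omega, ← hstep,
        show n + 1 - (j + 1) = n - j from by omega]
  have := key n le_rfl
  rwa [show n + 1 - n = 1 from by omega] at this

/-- the collocation matrix `L` of the Newton basis at pairwise
distinct nodes `t 1, …, t (n+1)` factorizes as `L = F_n ⋯ F_1 · D`. -/
theorem newton_collocation_bidiagonal_factorization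
    (n : ℕ) (hn : 1 ≤ n) (t : ℕ → ℝ)
    (ht : ∀ i j, 1 ≤ i → i ≤ n + 1 → 1 ≤ j → j ≤ n + 1 → i ≠ j → t i ≠ t j)
    (L : Matrix (Fin (n + 1)) (Fin (n + 1)) ℝ)
    (hL : ∀ i j, L i j = ∏ k ∈ Finset.Icc 1 j.val, (t (i.val + 1) - t k)) :
    L = ((List.range n).map (fun k => Fmat n t (n - k))).prod * Dmat n t := by
  rw [list_prod_eq n t ht hn]
  ext p q
  rw [hL p q]
  have hrhs : (Hmat n t 1 * Dmat n t) p q = Hdef t 1 p.val q.val * pEntry t (q.val + 1) := by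
    rw [Dmat, Matrix.mul_diagonal]; rfl
  rw [hrhs]
  have hpe : pEntry t (q.val + 1) = ∏ k ∈ Finset.Icc 1 q.val, (t (q.val + 1) - t k) := rfl
  rw [hpe]
  have hp2 : p.val < n + 1 := p.isLt
  have hq2 : q.val < n + 1 := q.isLt
  rcases lt_trichotomy q.val p.val with hlt | heq | hgt
  · rw [Hdef, if_pos ⟨hlt, by omega⟩, Finset.prod_div_distrib]
    have hD : (∏ k ∈ Finset.Icc 1 q.val, (t (q.val + 1) - t k)) ≠ 0 := by
      refine Finset.prod_ne_zero_iff.mpr fun k hk => ?_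
      simp only [mem_Icc] at hk
      exact sub_ne_zero.mpr (ht (q.val+1) k (by omega) (by omega) (by omega) (by omega) (by omega))
    rw [div_mul_cancel₀ _ hD]
  · rw [Hdef, if_neg (by omega), if_pos heq.symm, one_mul, heq]
  · rw [Hdef, if_neg (by omega), if_neg (by omega), zero_mul]
    refine Finset.prod_eq_zero (i := p.val + 1) (Finset.mem_Icc.mpr ⟨by omega, by omega⟩) ?_
    exact sub_self _
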